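/- Solution of the Bellman equation for the (d,∞)-runlength-limited input-constrained BEC (core of Theorem 8): Fix an integer d ≥ 1 and ε ∈ [0,1], and define ρ_ε := (1−ε) · max_{a ∈ [0,1]} h_b(a) / (a·d + 1). Then there exists a function h : {0, 1, …, d} → ℝ such that (i) ρ_ε + h(i) = h(i+1) for all 0 ≤ i ≤ d−1, and (ii) ρ_ε + h(d) = max_{a ∈ [0,1]} [ (1−ε)·h_b(a) + (1−a)·h(d) + a·h(0) ]. In particular, max_{a ∈ [0,1]} [ (1−ε)·h_b(a) − (a·d + 1)·ρ_ε ] = 0. -/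
import Mathlib


open Finset

/-- The binary entropy function (base 2); the convention `0 · log₂ 0 = 0` is
automatic since `Real.logb 2 0 = 0`. -/
noncomputable def binEnt (x : ℝ) : ℝ :=
  -(x * Real.logb 2 x) - (1 - x) * Real.logb 2 (1 - x)

/-- **Solution of the Bellman equation for the (d,∞)-RLL input-constrained BEC**
(core of Theorem 8 of the paper). With
`ρ_ε = (1−ε) · max_{a ∈ [0,1]} h_b(a) / (ad + 1)`, there is a function
`h : {0,…,d} → ℝ` with `ρ_ε + h(i) = h(i+1)` for `0 ≤ i ≤ d−1` and
`ρ_ε + h(d) = max_{a ∈ [0,1]} [(1−ε)h_b(a) + (1−a)h(d) + a·h(0)]`;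
in particular `max_{a ∈ [0,1]} [(1−ε)h_b(a) − (ad+1)ρ_ε] = 0`. -/
theorem bellman_dinfty_BEC (d : ℕ) (hd : 1 ≤ d) (ε : ℝ) (hε : ε ∈ Set.Icc (0 : ℝ) 1)
    (m ρ : ℝ)
    (hm : IsGreatest ((fun a : ℝ => binEnt a / (a * d + 1)) '' Set.Icc (0 : ℝ) 1) m)
    (hρ : ρ = (1 - ε) * m) :
    (∃ h : ℕ → ℝ,
      (∀ i < d, ρ + h i = h (i + 1)) ∧
      IsGreatest
        ((fun a : ℝ => (1 - ε) * binEnt a + (1 - a) * h d + a * h 0) '' Set.Icc (0 : ℝ) 1)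
        (ρ + h d)) ∧
    IsGreatest
      ((fun a : ℝ => (1 - ε) * binEnt a - (a * d + 1) * ρ) '' Set.Icc (0 : ℝ) 1) 0 := by
  obtain ⟨⟨a₀, ha₀, ha₀m⟩, hub⟩ := hm
  have hε1 : (0:ℝ) ≤ 1 - ε := by linarith [hε.2]
  have hpos : ∀ a : ℝ, a ∈ Set.Icc (0:ℝ) 1 → (0:ℝ) < a * d + 1 := by
    intro a ha
    have : (0:ℝ) ≤ a * d := mul_nonneg ha.1 (Nat.cast_nonneg d)
    linarith
  -- key inequality: for all a in [0,1], (1-ε) binEnt a - (a d + 1) ρ ≤ 0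
  have key : ∀ a ∈ Set.Icc (0:ℝ) 1, (1 - ε) * binEnt a - (a * d + 1) * ρ ≤ 0 := by
    intro a ha
    have h1 : binEnt a / (a * d + 1) ≤ m := hub ⟨a, ha, rfl⟩
    have hp := hpos a ha
    have h2 : binEnt a ≤ m * (a * d + 1) := by
      rw [div_le_iff₀ hp] at h1; linarith
    have h3 : (1 - ε) * binEnt a ≤ (1 - ε) * (m * (a * d + 1)) :=
      mul_le_mul_of_nonneg_left h2 hε1
    rw [hρ]; nlinarith
  -- equality at a₀
  have heq : (1 - ε) * binEnt a₀ - (a₀ * d + 1) * ρ = 0 := by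
    have hp := hpos a₀ ha₀
    have : binEnt a₀ = m * (a₀ * d + 1) := by
      field_simp at ha₀m ⊢; linarith [ha₀m]
    rw [hρ, this]; ring
  have main : IsGreatest
      ((fun a : ℝ => (1 - ε) * binEnt a - (a * d + 1) * ρ) '' Set.Icc (0 : ℝ) 1) 0 :=
    ⟨⟨a₀, ha₀, heq⟩, by rintro x ⟨a, ha, rfl⟩; exact key a ha⟩
  refine ⟨⟨fun i => i * ρ, fun i _ => by push_cast; ring, ?_⟩, main⟩
  have hfun : ∀ a : ℝ, (1 - ε) * binEnt a + (1 - a) * ((d:ℝ) * ρ) + a * ((0:ℕ) * ρ)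
      = ((1 - ε) * binEnt a - (a * d + 1) * ρ) + (ρ + (d:ℝ) * ρ) := by
    intro a; push_cast; ring
  constructor
  · exact ⟨a₀, ha₀, by simp only [hfun a₀, heq]; ring⟩
  · rintro x ⟨a, ha, rfl⟩
    simp only [hfun a]
    have := key a ha
    linarith
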